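/- Let $n_1, \ldots, n_k$ be natural numbers. The multinomial coefficient $\frac{(n_1 + \cdots + n_k)!}{n_1! \cdots n_k!}$ is odd if and only if for all $i \neq j$ the binary expansions of $n_i$ and $n_j$ have no $1$ in common (i.e., the bitwise AND of $n_i$ and $n_j$ is zero for all $i \neq j$). -/

import Mathlib

open Nat Finset

/-- Bitwise-disjoint numbers produce no carries when added. -/
lemma aux_no_carry {m n : ℕ} (h : m &&& n = 0) : ∀ i, m % 2 ^ i + n % 2 ^ i < 2 ^ i := by
  intro i
  induction i with
  | zero => simp [Nat.mod_one]
  | succ i ih =>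
    have hb : (m &&& n).testBit i = false := by rw [h]; exact Nat.zero_testBit i
    rw [Nat.testBit_land, Nat.testBit_eq_decide_div_mod_eq, Nat.testBit_eq_decide_div_mod_eq] at hb
    have h1 : m % 2 ^ (i + 1) = 2 ^ i * (m / 2 ^ i % 2) + m % 2 ^ i := by
      rw [pow_succ, Nat.mod_mul]; ring
    have h2 : n % 2 ^ (i + 1) = 2 ^ i * (n / 2 ^ i % 2) + n % 2 ^ i := by
      rw [pow_succ, Nat.mod_mul]; ring
    have hnot : ¬(m / 2 ^ i % 2 = 1 ∧ n / 2 ^ i % 2 = 1) := by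
      intro ⟨ha, hbb⟩; simp [ha, hbb] at hb
    have hm2 : m / 2 ^ i % 2 = 0 ∨ m / 2 ^ i % 2 = 1 := by omega
    have hn2 : n / 2 ^ i % 2 = 0 ∨ n / 2 ^ i % 2 = 1 := by omega
    rw [h1, h2, pow_succ]
    rcases hm2 with hx | hx <;> rcases hn2 with hy | hy <;>
      simp [hx, hy] at hnot ⊢ <;> omega

/-- A bit that is set forces a lower bound. -/
lemma aux_pow_le_of_testBit {m j : ℕ} (h : m.testBit j = true) : 2 ^ j ≤ m := by
  by_contra hlt
  rw [Nat.testBit_lt_two_pow (by omega)] at h; simp at h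

/-- A binomial coefficient `(m+n).choose m` is odd iff `m &&& n = 0`. -/
lemma aux_choose_odd_iff (m n : ℕ) : Odd ((m + n).choose m) ↔ m &&& n = 0 := by
  have hpos : 0 < (m + n).choose m := Nat.choose_pos (Nat.le_add_right m n)
  have hfact : Fact (Nat.Prime 2) := ⟨Nat.prime_two⟩
  have hb : Nat.log 2 (n + m) < Nat.log 2 (n + m) + 2 := by omega
  have hv := padicValNat_choose' (p := 2) (n := n) (k := m) (b := Nat.log 2 (n + m) + 2) hb
  have hodd : Odd ((m + n).choose m) ↔ padicValNat 2 ((n + m).choose m) = 0 := by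
    rw [add_comm m n]
    rw [padicValNat.eq_zero_iff, Nat.not_even_iff_odd.symm, even_iff_two_dvd]
    constructor
    · intro h; exact Or.inr (Or.inr h)
    · rintro (h | h | h)
      · norm_num at h
      · rw [add_comm n m] at h; omega
      · exact h
  rw [hodd, hv, Finset.card_eq_zero, Finset.filter_eq_empty_iff]
  constructor
  · intro hcar
    apply Nat.eq_of_testBit_eq
    intro j
    rw [Nat.zero_testBit, Nat.testBit_land]
    by_contra hj
    simp only [Bool.and_eq_true, Bool.not_eq_false] at hj
    obtain ⟨hjm, hjn⟩ := hj
    have h2m : 2 ^ j ≤ m := aux_pow_le_of_testBit hjm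
    have h2n : 2 ^ j ≤ n := aux_pow_le_of_testBit hjn
    have hp2 : 0 < 2 ^ j := Nat.pow_pos (by norm_num)
    have hle : 2 ^ j ≤ n + m := by omega
    have hjle : j ≤ Nat.log 2 (n + m) :=
      (Nat.le_log_iff_pow_le (b := 2) (x := j) (y := n + m) (by norm_num) (by omega)).mpr hle
    have hmem : j + 1 ∈ Finset.Ico 1 (Nat.log 2 (n + m) + 2) := by
      rw [Finset.mem_Ico]; omega
    apply hcar hmem
    rw [Nat.testBit_eq_decide_div_mod_eq] at hjm hjn
    simp only [decide_eq_true_eq] at hjm hjn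
    have h1 : m % 2 ^ (j + 1) = 2 ^ j * (m / 2 ^ j % 2) + m % 2 ^ j := by
      rw [pow_succ, Nat.mod_mul]; ring
    have h2 : n % 2 ^ (j + 1) = 2 ^ j * (n / 2 ^ j % 2) + n % 2 ^ j := by
      rw [pow_succ, Nat.mod_mul]; ring
    rw [h1, h2, hjm, hjn, pow_succ]
    omega
  · intro h i _
    have := aux_no_carry h i
    omega

/-- Adding bitwise-disjoint numbers is bitwise or. -/
lemma aux_add_eq_lor {a b : ℕ} (h : a &&& b = 0) : a + b = a ||| b := by
  have hnc := aux_no_carry h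
  apply Nat.eq_of_testBit_eq
  intro i
  rw [Nat.testBit_lor, Nat.testBit_eq_decide_div_mod_eq, Nat.testBit_eq_decide_div_mod_eq, Nat.testBit_eq_decide_div_mod_eq]
  have h1 : a % 2 ^ (i + 1) = 2 ^ i * (a / 2 ^ i % 2) + a % 2 ^ i := by
    rw [pow_succ, Nat.mod_mul]; ring
  have h2 : b % 2 ^ (i + 1) = 2 ^ i * (b / 2 ^ i % 2) + b % 2 ^ i := by
    rw [pow_succ, Nat.mod_mul]; ring
  have h3 : (a + b) % 2 ^ (i + 1) = 2 ^ i * ((a + b) / 2 ^ i % 2) + (a + b) % 2 ^ i := by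
    rw [pow_succ, Nat.mod_mul]; ring
  have hlt := hnc (i + 1)
  have hlt' := hnc i
  have hadd : (a + b) % 2 ^ (i + 1) = a % 2 ^ (i + 1) + b % 2 ^ (i + 1) := by
    rw [Nat.add_mod, Nat.mod_eq_of_lt hlt]
  have hb : (a &&& b).testBit i = false := by rw [h]; exact Nat.zero_testBit i
  rw [Nat.testBit_land, Nat.testBit_eq_decide_div_mod_eq, Nat.testBit_eq_decide_div_mod_eq] at hb
  have hnot : ¬(a / 2 ^ i % 2 = 1 ∧ b / 2 ^ i % 2 = 1) := by
    intro ⟨hx, hy⟩; simp [hx, hy] at hb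
  have ha2 : a / 2 ^ i % 2 = 0 ∨ a / 2 ^ i % 2 = 1 := by omega
  have hb2 : b / 2 ^ i % 2 = 0 ∨ b / 2 ^ i % 2 = 1 := by omega
  have hab2 : (a + b) / 2 ^ i % 2 = 0 ∨ (a + b) / 2 ^ i % 2 = 1 := by omega
  have h2i : 0 < 2 ^ i := Nat.pow_pos (by norm_num)
  have hkey : (a + b) / 2 ^ i % 2 = a / 2 ^ i % 2 + b / 2 ^ i % 2 := by
    rcases ha2 with hx | hx <;> rcases hb2 with hy | hy <;>
      rcases hab2 with hz | hz <;>
      rw [hx] at h1 hnot ⊢ <;> rw [hy] at h2 hnot ⊢ <;> rw [hz] at h3 ⊢ <;> omega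
  rw [hkey]
  rcases ha2 with hx | hx <;> rcases hb2 with hy | hy <;>
    simp [hx, hy] at hnot ⊢

/-- If `x` is disjoint from every member of a pairwise disjoint family, it is disjoint
from its sum. -/
lemma aux_land_sum {ι : Type*} [DecidableEq ι] (s : Finset ι) (f : ι → ℕ)
    (hpair : ∀ i ∈ s, ∀ j ∈ s, i ≠ j → f i &&& f j = 0) :
    ∀ x, (∀ j ∈ s, x &&& f j = 0) → x &&& (∑ j ∈ s, f j) = 0 := by
  induction s using Finset.induction_on with
  | empty => intro x _; simp
  | insert a s ha ih =>
    intro x hx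
    have hpair' : ∀ i ∈ s, ∀ j ∈ s, i ≠ j → f i &&& f j = 0 := fun i hi j hj =>
      hpair i (Finset.mem_insert_of_mem hi) j (Finset.mem_insert_of_mem hj)
    have hxa : x &&& f a = 0 := hx a (Finset.mem_insert_self a s)
    have hxs : x &&& (∑ j ∈ s, f j) = 0 :=
      ih hpair' x fun j hj => hx j (Finset.mem_insert_of_mem hj)
    have has : f a &&& (∑ j ∈ s, f j) = 0 := by
      apply ih hpair' (f a)
      intro j hj
      exact hpair a (Finset.mem_insert_self a s) j (Finset.mem_insert_of_mem hj)
        (fun hh => ha (hh ▸ hj))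
    rw [Finset.sum_insert ha, aux_add_eq_lor has]
    apply Nat.eq_of_testBit_eq
    intro i
    have t1 : (x &&& f a).testBit i = false := by rw [hxa]; exact Nat.zero_testBit i
    have t2 : (x &&& ∑ j ∈ s, f j).testBit i = false := by
      rw [hxs]; exact Nat.zero_testBit i
    rw [Nat.testBit_land] at t1 t2
    rw [Nat.zero_testBit, Nat.testBit_land, Nat.testBit_lor]
    cases hxb : x.testBit i
    · simp
    · simp [hxb] at t1 t2; simp [t1, t2]

/-- If `x` is disjoint from the sum of a pairwise disjoint family, it is disjoint
from every member. -/
lemma aux_land_of_land_sum {ι : Type*} [DecidableEq ι] (s : Finset ι) (f : ι → ℕ)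
    (hpair : ∀ i ∈ s, ∀ j ∈ s, i ≠ j → f i &&& f j = 0) (x : ℕ)
    (hx : x &&& (∑ j ∈ s, f j) = 0) : ∀ j ∈ s, x &&& f j = 0 := by
  intro j hj
  apply Nat.eq_of_testBit_eq
  intro k
  rw [Nat.zero_testBit, Nat.testBit_land]
  by_contra hk
  simp only [Bool.and_eq_true, Bool.not_eq_false] at hk
  obtain ⟨hkx, hkj⟩ := hk
  have hsum : (∑ t ∈ s, f t) = f j + ∑ t ∈ s.erase j, f t :=
    (Finset.add_sum_erase _ _ hj).symm
  have hdisj : f j &&& (∑ t ∈ s.erase j, f t) = 0 := by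
    apply aux_land_sum (s.erase j) f
    · intro u hu v hv huv
      exact hpair u (Finset.mem_of_mem_erase hu) v (Finset.mem_of_mem_erase hv) huv
    · intro t ht
      exact hpair j hj t (Finset.mem_of_mem_erase ht)
        (fun hh => (Finset.ne_of_mem_erase ht) hh.symm)
  have hbit : (∑ t ∈ s, f t).testBit k = true := by
    rw [hsum, aux_add_eq_lor hdisj, Nat.testBit_lor, hkj]; simp
  have hfin : (x &&& ∑ t ∈ s, f t).testBit k = false := by
    rw [hx]; exact Nat.zero_testBit k
  rw [Nat.testBit_land, hkx, hbit] at hfin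
  simp at hfin

/-- The multinomial coefficient of a finite family is odd iff the members of
the family pairwise share no 1 in their binary expansions. -/
theorem multinomial_odd_iff (ι : Type*) [DecidableEq ι] (s : Finset ι) (f : ι → ℕ) :
    Odd (Nat.multinomial s f) ↔ ∀ i ∈ s, ∀ j ∈ s, i ≠ j → f i &&& f j = 0 := by
  induction s using Finset.induction_on with
  | empty => simp
  | insert a s ha ih =>
    rw [Nat.multinomial_insert ha, Nat.odd_mul, aux_choose_odd_iff, ih]
    constructor
    · rintro ⟨hch, hp⟩ i hi j hj hij
      rcases Finset.mem_insert.mp hi with hia | hi'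
      · subst hia
        rcases Finset.mem_insert.mp hj with hja | hj'
        · exact absurd hja.symm hij
        · exact aux_land_of_land_sum s f hp (f i) hch j hj'
      · rcases Finset.mem_insert.mp hj with hja | hj'
        · subst hja
          rw [Nat.land_comm]
          exact aux_land_of_land_sum s f hp (f j) hch i hi'
        · exact hp i hi' j hj' hij
    · intro h
      refine ⟨?_, fun i hi j hj hij =>
        h i (Finset.mem_insert_of_mem hi) j (Finset.mem_insert_of_mem hj) hij⟩
      apply aux_land_sum s f
      · intro i hi j hj hij
        exact h i (Finset.mem_insert_of_mem hi) j (Finset.mem_insert_of_mem hj) hij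
      · intro j hj
        exact h a (Finset.mem_insert_self a s) j (Finset.mem_insert_of_mem hj)
          (fun hh => ha (hh ▸ hj))
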